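/- The algebraic Riccati equation has at most one solution: if K₁ and K₂ are positive semidefinite n×n matrices with K₁ = π(E[N₁ + A₁ᵀ K₁ A₁]) and K₂ = π(E[N₁ + A₁ᵀ K₂ A₁]), then K₁ = K₂. -/

import Mathlib

open MeasureTheory Matrix Filter ProbabilityTheory
open scoped ENNReal NNReal

noncomputable section

instance matrixMeasurableSpace {I J : Type*} : MeasurableSpace (Matrix I J ℝ) :=
  inferInstanceAs (MeasurableSpace (I → J → ℝ))

/-- The Schur-complement map `π(P) = P_xx − P_xu P_uu⁻¹ P_ux`. -/
def piMap {n m : ℕ} (P : Matrix (Fin n ⊕ Fin m) (Fin n ⊕ Fin m) ℝ) :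
    Matrix (Fin n) (Fin n) ℝ :=
  P.toBlocks₁₁ - P.toBlocks₁₂ * P.toBlocks₂₂⁻¹ * P.toBlocks₂₁

/-- The feedback-gain map `Γ(P) = −P_uu⁻¹ P_ux`. -/
def gammaMap {n m : ℕ} (P : Matrix (Fin n ⊕ Fin m) (Fin n ⊕ Fin m) ℝ) :
    Matrix (Fin m) (Fin n) ℝ :=
  -(P.toBlocks₂₂⁻¹ * P.toBlocks₂₁)

/-- Loewner order: `X ≤ Y` iff `Y - X` is positive semidefinite. -/
def loewnerLE {I : Type*} [Fintype I] (X Y : Matrix I I ℝ) : Prop :=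
  (Y - X).PosSemidef

/-- Spectral norm (`2`-norm) of a real matrix. -/
def specNorm {I J : Type*} [Fintype I] [Fintype J] [DecidableEq J]
    (M : Matrix I J ℝ) : ℝ :=
  ‖LinearMap.toContinuousLinearMap (Matrix.toEuclideanLin M)‖

/-- Entrywise expectation of a random matrix. -/
def matExp {Ω : Type*} [MeasurableSpace Ω] (μpr : Measure Ω) {I J : Type*}
    (M : Ω → Matrix I J ℝ) : Matrix I J ℝ :=
  Matrix.of fun i j => ∫ ω, M ω i j ∂μpr

section LQ

variable {n m : ℕ} {Ω : Type*} [MeasurableSpace Ω]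

/-- The filtration `𝓕_t = σ(A_s, N_s : 1 ≤ s ≤ t)` (with `𝓕_0` trivial). -/
def lqFiltration (A : ℕ → Ω → Matrix (Fin n) (Fin n ⊕ Fin m) ℝ)
    (N : ℕ → Ω → Matrix (Fin n ⊕ Fin m) (Fin n ⊕ Fin m) ℝ) :
    ℕ → MeasurableSpace Ω := fun t =>
  ⨆ s ∈ Finset.Icc 1 t, MeasurableSpace.comap (fun ω => (A s ω, N s ω)) inferInstance

/-- A control is admissible if it is adapted to the filtration. -/
def Admissible {k : ℕ} (F : ℕ → MeasurableSpace Ω) (u : ℕ → Ω → Fin k → ℝ) : Prop :=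
  ∀ t, @Measurable Ω (Fin k → ℝ) (F t) _ (u t)

/-- The state process `x_0 = x`, `x_{t+1} = A_{t+1} [x_t; u_t]`. -/
def statePath (A : ℕ → Ω → Matrix (Fin n) (Fin n ⊕ Fin m) ℝ)
    (x : Fin n → ℝ) (u : ℕ → Ω → Fin m → ℝ) : ℕ → Ω → Fin n → ℝ
  | 0 => fun _ => x
  | t + 1 => fun ω => A (t + 1) ω *ᵥ Sum.elim (statePath A x u t ω) (u t ω)

/-- The stage cost `[x_tᵀ, u_tᵀ] N_{t+1} [x_t; u_t]`. -/
def stageCost (A : ℕ → Ω → Matrix (Fin n) (Fin n ⊕ Fin m) ℝ)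
    (N : ℕ → Ω → Matrix (Fin n ⊕ Fin m) (Fin n ⊕ Fin m) ℝ)
    (x : Fin n → ℝ) (u : ℕ → Ω → Fin m → ℝ) (t : ℕ) (ω : Ω) : ℝ :=
  Sum.elim (statePath A x u t ω) (u t ω) ⬝ᵥ
    (N (t + 1) ω *ᵥ Sum.elim (statePath A x u t ω) (u t ω))

/-- The total cost `J(x, u) ∈ [0,∞]`. -/
def costJ (A : ℕ → Ω → Matrix (Fin n) (Fin n ⊕ Fin m) ℝ)
    (N : ℕ → Ω → Matrix (Fin n ⊕ Fin m) (Fin n ⊕ Fin m) ℝ)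
    (x : Fin n → ℝ) (u : ℕ → Ω → Fin m → ℝ) (ω : Ω) : ℝ≥0∞ :=
  ∑' t, ENNReal.ofReal (stageCost A N x u t ω)

/-- The value function `V(x) = inf over admissible u of E[J(x,u)]`. -/
def valueV (μpr : Measure Ω) (A : ℕ → Ω → Matrix (Fin n) (Fin n ⊕ Fin m) ℝ)
    (N : ℕ → Ω → Matrix (Fin n ⊕ Fin m) (Fin n ⊕ Fin m) ℝ)
    (x : Fin n → ℝ) : ℝ≥0∞ :=
  ⨅ (u : ℕ → Ω → Fin m → ℝ) (_ : Admissible (lqFiltration A N) u),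
    ∫⁻ ω, costJ A N x u ω ∂μpr

/-- The Riccati iteration `K_0 = O`, `K_{t+1} = π(E[N₁ + A₁ᵀ K_t A₁])`. -/
def Kseq (μpr : Measure Ω) (A : ℕ → Ω → Matrix (Fin n) (Fin n ⊕ Fin m) ℝ)
    (N : ℕ → Ω → Matrix (Fin n ⊕ Fin m) (Fin n ⊕ Fin m) ℝ) :
    ℕ → Matrix (Fin n) (Fin n) ℝ
  | 0 => 0
  | t + 1 => piMap (matExp μpr (fun ω => N 1 ω + (A 1 ω)ᵀ * Kseq μpr A N t * A 1 ω))

/-- The Q-learning process of Algorithm 1. -/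
def Qproc (A : ℕ → Ω → Matrix (Fin n) (Fin n ⊕ Fin m) ℝ)
    (N : ℕ → Ω → Matrix (Fin n ⊕ Fin m) (Fin n ⊕ Fin m) ℝ)
    (α : ℕ → Ω → ℝ) (Q0 : Matrix (Fin n ⊕ Fin m) (Fin n ⊕ Fin m) ℝ) :
    ℕ → Ω → Matrix (Fin n ⊕ Fin m) (Fin n ⊕ Fin m) ℝ
  | 0 => fun _ => Q0
  | t + 1 => fun ω =>
      Qproc A N α Q0 t ω + α t ω •
        (N (t + 1) ω + (A (t + 1) ω)ᵀ * piMap (Qproc A N α Q0 t ω) * A (t + 1) ω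
          - Qproc A N α Q0 t ω)

end LQ

section AuxARE
open scoped Matrix.Norms.L2Operator RealInnerProductSpace
variable {ι κ : Type*} [Fintype ι] [Fintype κ] [DecidableEq ι] [DecidableEq κ]

set_option linter.unusedSectionVars false

variable {ι κ : Type*} [Fintype ι] [Fintype κ] [DecidableEq ι] [DecidableEq κ]

lemma entry_abs_le_norm (M : Matrix ι κ ℝ) (i : ι) (j : κ) : |M i j| ≤ ‖M‖ := by
  have h1 := M.l2_opNorm_mulVec (EuclideanSpace.single j (1:ℝ))
  rw [EuclideanSpace.norm_single, norm_one, mul_one] at h1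
  set v : EuclideanSpace ℝ ι :=
    (EuclideanSpace.equiv ι ℝ).symm (M *ᵥ (EuclideanSpace.single j (1:ℝ) : κ → ℝ)) with hv
  have h3 : v i = M i j := by
    show (M *ᵥ (EuclideanSpace.single j (1:ℝ) : κ → ℝ)) i = M i j
    have : (EuclideanSpace.single j (1:ℝ) : κ → ℝ) = Pi.single j 1 := rfl
    rw [this, Matrix.mulVec_single]; simp
  have h4 : M i j = @inner ℝ _ _ (EuclideanSpace.single i (1:ℝ)) v := by
    rw [EuclideanSpace.inner_single_left]; simp [h3]
  calc |M i j| = |@inner ℝ _ _ (EuclideanSpace.single i (1:ℝ)) v| := by rw [h4]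
    _ ≤ ‖EuclideanSpace.single i (1:ℝ)‖ * ‖v‖ := abs_real_inner_le_norm _ _
    _ ≤ ‖M‖ := by rw [EuclideanSpace.norm_single, norm_one, one_mul]; exact h1

lemma norm_conj_le (E : Matrix κ ι ℝ) (X : Matrix κ κ ℝ) :
    ‖Eᵀ * X * E‖ ≤ ‖E‖ * ‖E‖ * ‖X‖ := by
  calc ‖Eᵀ * X * E‖ ≤ ‖Eᵀ * X‖ * ‖E‖ := Matrix.l2_opNorm_mul _ _
    _ ≤ ‖Eᵀ‖ * ‖X‖ * ‖E‖ := by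
        have := Matrix.l2_opNorm_mul Eᵀ X
        nlinarith [norm_nonneg E, norm_nonneg (Eᵀ*X), norm_nonneg X]
    _ = ‖E‖ * ‖E‖ * ‖X‖ := by
        have : Eᵀ = Eᴴ := by ext i j; simp [conjTranspose_apply]
        rw [this, Matrix.l2_opNorm_conjTranspose]; ring

lemma norm_AXA_le (A : Matrix ι κ ℝ) (X : Matrix ι ι ℝ) :
    ‖Aᵀ * X * A‖ ≤ ‖X‖ * ‖Aᵀ * A‖ := by
  have h := norm_conj_le A X
  have h2 : ‖Aᵀ * A‖ = ‖A‖ * ‖A‖ := by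
    have : Aᵀ = Aᴴ := by ext i j; simp [conjTranspose_apply]
    rw [this]; exact Matrix.l2_opNorm_conjTranspose_mul_self A
  rw [h2]; nlinarith [norm_nonneg A, norm_nonneg X]

open MeasureTheory

section ME
variable {Ω : Type*} [MeasurableSpace Ω] {μ : Measure Ω}
variable {l : Type*} [Fintype l] [DecidableEq l]

lemma measurable_entry {F : Ω → Matrix ι κ ℝ} (hF : Measurable F) (i : ι) (j : κ) :
    Measurable fun ω => F ω i j :=
  (measurable_pi_apply j).comp ((measurable_pi_apply i).comp hF)

lemma Measurable.matrix_mul {F : Ω → Matrix ι κ ℝ} {G : Ω → Matrix κ l ℝ}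
    (hF : Measurable F) (hG : Measurable G) : Measurable fun ω => F ω * G ω := by
  apply measurable_pi_lambda; intro i; apply measurable_pi_lambda; intro j
  simp only [Matrix.mul_apply]
  exact Finset.measurable_sum _ fun k _ => (measurable_entry hF i k).mul (measurable_entry hG k j)

lemma Measurable.matrix_transpose {F : Ω → Matrix ι κ ℝ} (hF : Measurable F) :
    Measurable fun ω => (F ω)ᵀ := by
  apply measurable_pi_lambda; intro i; apply measurable_pi_lambda; intro j
  exact measurable_entry hF j i

lemma matExp_apply (F : Ω → Matrix ι κ ℝ) (i : ι) (j : κ) :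
    matExp μ F i j = ∫ ω, F ω i j ∂μ := rfl

lemma matExp_add {F G : Ω → Matrix ι κ ℝ}
    (hF : ∀ i j, Integrable (fun ω => F ω i j) μ)
    (hG : ∀ i j, Integrable (fun ω => G ω i j) μ) :
    matExp μ (fun ω => F ω + G ω) = matExp μ F + matExp μ G := by
  ext i j
  simp only [matExp, Matrix.of_apply, Matrix.add_apply]
  exact integral_add (hF i j) (hG i j)

lemma matExp_sub {F G : Ω → Matrix ι κ ℝ}
    (hF : ∀ i j, Integrable (fun ω => F ω i j) μ)
    (hG : ∀ i j, Integrable (fun ω => G ω i j) μ) :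
    matExp μ (fun ω => F ω - G ω) = matExp μ F - matExp μ G := by
  ext i j
  simp only [matExp, Matrix.of_apply, Matrix.sub_apply]
  exact integral_sub (hF i j) (hG i j)

lemma matExp_smul (r : ℝ) {F : Ω → Matrix ι κ ℝ} :
    matExp μ (fun ω => r • F ω) = r • matExp μ F := by
  ext i j
  simp only [matExp, Matrix.of_apply, Matrix.smul_apply, smul_eq_mul]
  exact integral_const_mul r _

lemma matExp_conj {l' : Type*} [Fintype l'] {F : Ω → Matrix ι κ ℝ}
    (B : Matrix l ι ℝ) (D : Matrix κ l' ℝ)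
    (hF : ∀ i j, Integrable (fun ω => F ω i j) μ) :
    matExp μ (fun ω => B * F ω * D) = B * matExp μ F * D := by
  ext i j
  have h1 : ∀ (x : ι) (k : κ), Integrable (fun ω => B i x * F ω x k * D k j) μ :=
    fun x k => ((hF x k).const_mul _).mul_const _
  show (∫ ω, (B * F ω * D) i j ∂μ) = (B * matExp μ F * D) i j
  calc (∫ ω, (B * F ω * D) i j ∂μ)
      = ∫ ω, ∑ k, ∑ x, B i x * F ω x k * D k j ∂μ := by
        congr 1; funext ω; simp [Matrix.mul_apply, Finset.sum_mul]
    _ = ∑ k, ∑ x, B i x * (∫ ω, F ω x k ∂μ) * D k j := by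
        rw [integral_finset_sum _ (fun k _ => integrable_finset_sum _ (fun x _ => h1 x k))]
        refine Finset.sum_congr rfl fun k _ => ?_
        rw [integral_finset_sum _ (fun x _ => h1 x k)]
        refine Finset.sum_congr rfl fun x _ => ?_
        rw [integral_mul_const, integral_const_mul]
    _ = (B * matExp μ F * D) i j := by simp [Matrix.mul_apply, matExp, Finset.sum_mul]

def quad (x : ι → ℝ) (M : Matrix ι ι ℝ) : ℝ := x ⬝ᵥ (M *ᵥ x)

lemma quad_expand (x : ι → ℝ) (M : Matrix ι ι ℝ) :
    quad x M = ∑ i, ∑ j, x i * M i j * x j := by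
  simp [quad, dotProduct, Matrix.mulVec, Finset.mul_sum, mul_assoc]

lemma posSemidef_iff_quad (M : Matrix ι ι ℝ) :
    M.PosSemidef ↔ M.IsHermitian ∧ ∀ x : ι → ℝ, 0 ≤ quad x M := by
  rw [Matrix.posSemidef_iff_dotProduct_mulVec]; unfold quad
  simp [star_trivial]

lemma quad_nonneg_of_posSemidef {M : Matrix ι ι ℝ} (hM : M.PosSemidef) (x : ι → ℝ) :
    0 ≤ quad x M := ((posSemidef_iff_quad M).1 hM).2 x

lemma quad_add (x : ι → ℝ) (M P : Matrix ι ι ℝ) :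
    quad x (M + P) = quad x M + quad x P := by
  simp [quad, Matrix.add_mulVec, dotProduct_add]

lemma quad_sub (x : ι → ℝ) (M P : Matrix ι ι ℝ) :
    quad x (M - P) = quad x M - quad x P := by
  simp [quad, Matrix.sub_mulVec, dotProduct_sub]

lemma quad_smul (x : ι → ℝ) (r : ℝ) (M : Matrix ι ι ℝ) :
    quad x (r • M) = r * quad x M := by
  simp [quad, Matrix.smul_mulVec, dotProduct_smul]

lemma quad_sum (x : ι → ℝ) (t : ℕ) (f : ℕ → Matrix ι ι ℝ) :
    quad x (∑ s ∈ Finset.range t, f s) = ∑ s ∈ Finset.range t, quad x (f s) := by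
  induction t with
  | zero => simp [quad]
  | succ t ih => rw [Finset.sum_range_succ, Finset.sum_range_succ, quad_add, ih]

lemma matExp_isHermitian {F : Ω → Matrix ι ι ℝ} (h : ∀ ω, (F ω).IsHermitian) :
    (matExp μ F).IsHermitian := by
  ext i j
  simp only [conjTranspose_apply, matExp, Matrix.of_apply, star_trivial]
  exact integral_congr_ae (Filter.Eventually.of_forall fun ω => congrFun (congrFun (h ω) i) j)

lemma matExp_posSemidef {F : Ω → Matrix ι ι ℝ} (h : ∀ ω, (F ω).PosSemidef)
    (hF : ∀ i j, Integrable (fun ω => F ω i j) μ) :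
    (matExp μ F).PosSemidef := by
  rw [posSemidef_iff_quad]
  refine ⟨matExp_isHermitian fun ω => (h ω).isHermitian, fun x => ?_⟩
  have h1 : ∀ (i j : ι), Integrable (fun ω => x i * F ω i j * x j) μ :=
    fun i j => ((hF i j).const_mul _).mul_const _
  have : quad x (matExp μ F) = ∫ ω, quad x (F ω) ∂μ := by
    rw [quad_expand]
    rw [show (∫ ω, quad x (F ω) ∂μ) = ∫ ω, ∑ i, ∑ j, x i * F ω i j * x j ∂μ by
      congr 1; funext ω; rw [quad_expand]]
    rw [integral_finset_sum _ (fun i _ => integrable_finset_sum _ (fun j _ => h1 i j))]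
    refine Finset.sum_congr rfl fun i _ => ?_
    rw [integral_finset_sum _ (fun j _ => h1 i j)]
    refine Finset.sum_congr rfl fun j _ => ?_
    rw [integral_mul_const, integral_const_mul]
    rfl
  rw [this]
  exact integral_nonneg fun ω => quad_nonneg_of_posSemidef (h ω) x

end ME

section Schur
variable {n m : ℕ}

lemma toBlocks22_posDef {P : Matrix (Fin n ⊕ Fin m) (Fin n ⊕ Fin m) ℝ}
    (hP : P.PosDef) : P.toBlocks₂₂.PosDef := by
  refine Matrix.PosDef.of_dotProduct_mulVec_pos ?_ ?_
  · ext i j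
    simpa [toBlocks₂₂, conjTranspose_apply] using congrFun (congrFun hP.1 (Sum.inr i)) (Sum.inr j)
  · intro x hx
    have hy : (Sum.elim (0 : Fin n → ℝ) x) ≠ 0 := by
      intro h
      apply hx
      funext i
      exact congrFun h (Sum.inr i)
    have := hP.dotProduct_mulVec_pos hy
    simpa [dotProduct, Matrix.mulVec, Fintype.sum_sum_type, toBlocks₂₂] using this

omit [Fintype ι] [Fintype κ] [DecidableEq ι] [DecidableEq κ] in
lemma real_conjTranspose (M : Matrix ι κ ℝ) : Mᴴ = Mᵀ := by
  ext i j; simp [conjTranspose_apply]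

lemma schur_identity {P : Matrix (Fin n ⊕ Fin m) (Fin n ⊕ Fin m) ℝ}
    (hP : P.IsHermitian) (h22 : P.toBlocks₂₂.PosDef) (L : Matrix (Fin m) (Fin n) ℝ) :
    (fromRows (1 : Matrix (Fin n) (Fin n) ℝ) L)ᵀ * P * fromRows (1 : Matrix (Fin n) (Fin n) ℝ) L =
      piMap P + (L - gammaMap P)ᵀ * P.toBlocks₂₂ * (L - gammaMap P) := by
  have hsym : Pᵀ = P := by rw [← real_conjTranspose]; exact hP
  have h21 : P.toBlocks₂₁ = P.toBlocks₁₂ᵀ := by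
    ext i j
    exact (congrFun (congrFun hsym (Sum.inr i)) (Sum.inl j)).symm
  have h22s : P.toBlocks₂₂ᵀ = P.toBlocks₂₂ := by
    ext i j
    exact congrFun (congrFun hsym (Sum.inr i)) (Sum.inr j)
  have hunit : IsUnit P.toBlocks₂₂.det := h22.isUnit.map (Matrix.detMonoidHom)
  have hinvs : P.toBlocks₂₂⁻¹ᵀ = P.toBlocks₂₂⁻¹ := by
    rw [Matrix.transpose_nonsing_inv, h22s]
  nth_rewrite 1 [← Matrix.fromBlocks_toBlocks P]
  rw [Matrix.mul_assoc, Matrix.fromBlocks_mul_fromRows, Matrix.transpose_fromRows, Matrix.fromCols_mul_fromRows]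
  unfold piMap gammaMap
  simp only [sub_neg_eq_add, Matrix.transpose_add, Matrix.transpose_mul, hinvs, h21,
    Matrix.transpose_transpose, Matrix.transpose_one, Matrix.one_mul, Matrix.mul_one,
    Matrix.add_mul, Matrix.mul_add, Matrix.mul_assoc,
    Matrix.mul_nonsing_inv_cancel_left _ _ hunit, Matrix.nonsing_inv_mul_cancel_left _ _ hunit]
  abel

end Schur

section Bounds
variable {ι : Type*} [Fintype ι] [DecidableEq ι]

lemma isHermitian_iff_transpose {M : Matrix ι ι ℝ} : M.IsHermitian ↔ Mᵀ = M := by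
  rw [Matrix.IsHermitian, real_conjTranspose]

lemma quad_neg (x : ι → ℝ) (M : Matrix ι ι ℝ) : quad x (-M) = -quad x M := by
  simp [quad, Matrix.neg_mulVec]

lemma quad_single_single (D : Matrix ι ι ℝ) (i j : ι) :
    Pi.single i (1:ℝ) ⬝ᵥ D *ᵥ Pi.single j 1 = D i j := by
  rw [Matrix.mulVec_single]
  simp [dotProduct, Pi.single_apply]

lemma smul_one_sub_posSemidef (M : Matrix ι ι ℝ) (hM : M.IsHermitian) :
    (((∑ i, ∑ j, |M i j|) • (1 : Matrix ι ι ℝ)) - M).PosSemidef := by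
  rw [posSemidef_iff_quad]
  constructor
  · rw [isHermitian_iff_transpose]
    rw [Matrix.transpose_sub, Matrix.transpose_smul, Matrix.transpose_one,
      isHermitian_iff_transpose.1 hM]
  · intro x
    rw [quad_sub, quad_smul, sub_nonneg]
    have h1 : quad x (1 : Matrix ι ι ℝ) = ∑ k, (x k)^2 := by
      simp [quad, dotProduct, sq]
    rw [h1, quad_expand]
    calc ∑ i, ∑ j, x i * M i j * x j ≤ ∑ i, ∑ j, |M i j| * (∑ k, (x k)^2) := by
          refine Finset.sum_le_sum fun i _ => Finset.sum_le_sum fun j _ => ?_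
          have : x i * M i j * x j ≤ |M i j| * (|x i| * |x j|) := by
            calc x i * M i j * x j ≤ |x i * M i j * x j| := le_abs_self _
              _ = |M i j| * (|x i| * |x j|) := by rw [abs_mul, abs_mul]; ring
          refine this.trans (mul_le_mul_of_nonneg_left ?_ (abs_nonneg _))
          calc |x i| * |x j| ≤ ((x i)^2 + (x j)^2)/2 := by nlinarith [sq_abs (x i), sq_abs (x j), sq_nonneg (|x i| - |x j|)]
            _ ≤ ∑ k, (x k)^2 := by
                have hi : (x i)^2 ≤ ∑ k, (x k)^2 :=
                  Finset.single_le_sum (fun k _ => sq_nonneg (x k)) (Finset.mem_univ i)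
                have hj : (x j)^2 ≤ ∑ k, (x k)^2 :=
                  Finset.single_le_sum (fun k _ => sq_nonneg (x k)) (Finset.mem_univ j)
                linarith
      _ = (∑ i, ∑ j, |M i j|) * ∑ k, (x k)^2 := by rw [Finset.sum_mul]; refine Finset.sum_congr rfl fun i _ => by rw [Finset.sum_mul]

lemma exists_psd_bound {C D : Matrix ι ι ℝ} (hC : C.PosDef) (hD : D.IsHermitian) :
    ∃ r : ℝ, 0 ≤ r ∧ (r • C - D).PosSemidef ∧ (r • C + D).PosSemidef := by
  obtain ⟨S, hSpsd, hSS⟩ : ∃ S : Matrix ι ι ℝ, S.PosSemidef ∧ S * S = C :=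
    by open scoped MatrixOrder in exact ⟨CFC.sqrt C, (CFC.sqrt_nonneg C).posSemidef, CFC.sqrt_mul_sqrt_self C hC.posSemidef.nonneg⟩
  have hdet : IsUnit S.det := by
    have h2 : S.det * S.det = C.det := by rw [← Matrix.det_mul, hSS]
    have := hC.det_pos
    refine isUnit_iff_ne_zero.2 fun h => ?_
    rw [h, mul_zero] at h2
    exact absurd h2.symm (ne_of_gt this)
  have hSsym : Sᵀ = S := by rw [← real_conjTranspose]; exact hSpsd.isHermitian
  have hSinvsym : S⁻¹ᵀ = S⁻¹ := by rw [Matrix.transpose_nonsing_inv, hSsym]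
  set M : Matrix ι ι ℝ := S⁻¹ * D * S⁻¹ with hM
  have hMsym : M.IsHermitian := by
    rw [Matrix.IsHermitian, real_conjTranspose, hM, Matrix.transpose_mul, Matrix.transpose_mul,
      hSinvsym]
    rw [show Dᵀ = D from by rw [← real_conjTranspose]; exact hD]
    rw [Matrix.mul_assoc]
  have hMsym' : (-M).IsHermitian := hMsym.neg
  set r : ℝ := ∑ i, ∑ j, |M i j| with hr
  have hrneg : ∀ i j, |(-M) i j| = |M i j| := fun i j => by simp
  have hb1 := smul_one_sub_posSemidef M hMsym
  have hb2 := smul_one_sub_posSemidef (-M) hMsym'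
  simp only [hrneg] at hb2
  have hrw : ∀ X : Matrix ι ι ℝ, S * X * S = S * X * Sᴴ := fun X => by
    rw [real_conjTranspose, hSsym]
  have key : ∀ X : Matrix ι ι ℝ, X.PosSemidef → (S * X * S).PosSemidef := fun X hX => by
    rw [hrw]; exact hX.mul_mul_conjTranspose_same S
  have hSMS : S * M * S = D := by
    rw [hM]
    calc S * (S⁻¹ * D * S⁻¹) * S = (S * S⁻¹) * D * (S⁻¹ * S) := by
          simp only [Matrix.mul_assoc]
      _ = D := by rw [Matrix.mul_nonsing_inv _ hdet, Matrix.nonsing_inv_mul _ hdet,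
          Matrix.one_mul, Matrix.mul_one]
  have hS1S : ∀ c : ℝ, S * (c • (1 : Matrix ι ι ℝ)) * S = c • C := fun c => by
    rw [Matrix.mul_smul, Matrix.smul_mul, Matrix.mul_one, hSS]
  refine ⟨r, Finset.sum_nonneg fun i _ => Finset.sum_nonneg fun j _ => abs_nonneg _, ?_, ?_⟩
  · have := key _ hb1
    rwa [Matrix.mul_sub, Matrix.sub_mul, hS1S, hSMS] at this
  · have := key _ hb2
    rw [sub_neg_eq_add] at this
    have := key _ hb2
    rwa [show r • (1:Matrix ι ι ℝ) - -M = r • 1 + M from by abel, Matrix.mul_add,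
      Matrix.add_mul, hS1S, hSMS] at this

lemma posSemidef_antisymm {D : Matrix ι ι ℝ} (h1 : D.PosSemidef) (h2 : (-D).PosSemidef) :
    D = 0 := by
  have hq : ∀ x, quad x D = 0 := fun x => le_antisymm
    (by have := quad_nonneg_of_posSemidef h2 x; rw [quad_neg] at this; linarith)
    (quad_nonneg_of_posSemidef h1 x)
  have hsym : Dᵀ = D := by rw [← real_conjTranspose]; exact h1.isHermitian
  ext i j
  have h0 : ∀ k, D k k = 0 := fun k => by
    have := hq (Pi.single k 1)
    rwa [quad, quad_single_single] at this
  by_cases hij : i = j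
  · subst hij; simp [h0 i]
  · have := hq (Pi.single i 1 + Pi.single j 1)
    rw [quad] at this
    rw [Matrix.mulVec_add, add_dotProduct, dotProduct_add, dotProduct_add,
      quad_single_single, quad_single_single, quad_single_single, quad_single_single] at this
    have hswap : D j i = D i j := congrFun (congrFun hsym i) j
    simp only [Matrix.zero_apply]
    rw [h0 i, h0 j, hswap] at this
    linarith

end Bounds

section Conj
variable {n m : ℕ}

lemma posDef_conj_fromRows {M : Matrix (Fin n ⊕ Fin m) (Fin n ⊕ Fin m) ℝ} (hM : M.PosDef)
    (Γ : Matrix (Fin m) (Fin n) ℝ) :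
    ((fromRows (1 : Matrix (Fin n) (Fin n) ℝ) Γ)ᵀ * M * fromRows (1 : Matrix (Fin n) (Fin n) ℝ) Γ).PosDef := by
  set E := fromRows (1 : Matrix (Fin n) (Fin n) ℝ) Γ with hE
  have hMsym : Mᵀ = M := isHermitian_iff_transpose.1 hM.isHermitian
  refine Matrix.PosDef.of_dotProduct_mulVec_pos ?_ ?_
  · rw [isHermitian_iff_transpose, Matrix.transpose_mul, Matrix.transpose_mul,
      Matrix.transpose_transpose, hMsym, Matrix.mul_assoc]
  · intro x hx
    have hEx : E *ᵥ x ≠ 0 := by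
      intro h
      apply hx
      funext i
      have := congrFun h (Sum.inl i)
      rw [hE, Matrix.fromRows_mulVec] at this
      simpa using this
    have h := hM.dotProduct_mulVec_pos hEx
    rw [star_trivial] at h ⊢
    rw [Matrix.mul_assoc, ← Matrix.mulVec_mulVec, ← Matrix.mulVec_mulVec,
      Matrix.dotProduct_mulVec x, Matrix.vecMul_transpose]
    exact h

lemma piMap_loewner {P : Matrix (Fin n ⊕ Fin m) (Fin n ⊕ Fin m) ℝ}
    (hP : P.IsHermitian) (h22 : P.toBlocks₂₂.PosDef) (L : Matrix (Fin m) (Fin n) ℝ) :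
    ((fromRows (1 : Matrix (Fin n) (Fin n) ℝ) L)ᵀ * P * fromRows (1 : Matrix (Fin n) (Fin n) ℝ) L - piMap P).PosSemidef := by
  rw [schur_identity hP h22 L, add_sub_cancel_left]
  have h := (h22.posSemidef).conjTranspose_mul_mul_same (L - gammaMap P)
  rwa [real_conjTranspose] at h

lemma piMap_eq_gamma {P : Matrix (Fin n ⊕ Fin m) (Fin n ⊕ Fin m) ℝ}
    (hP : P.IsHermitian) (h22 : P.toBlocks₂₂.PosDef) :
    (fromRows (1 : Matrix (Fin n) (Fin n) ℝ) (gammaMap P))ᵀ * P * fromRows (1 : Matrix (Fin n) (Fin n) ℝ) (gammaMap P)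
      = piMap P := by
  rw [schur_identity hP h22 (gammaMap P), sub_self, Matrix.transpose_zero, Matrix.zero_mul,
    Matrix.mul_zero, add_zero]

end Conj

section Half
set_option maxHeartbeats 1000000
open Filter
variable {n m : ℕ} {Ω : Type*} [MeasurableSpace Ω]

lemma ARE_loewnerLE (μ : Measure Ω) [IsProbabilityMeasure μ]
    (A1 : Ω → Matrix (Fin n) (Fin n ⊕ Fin m) ℝ)
    (N1 : Ω → Matrix (Fin n ⊕ Fin m) (Fin n ⊕ Fin m) ℝ)
    (hmeasA : Measurable A1) (hmeasN : Measurable N1)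
    (hmom : Integrable (fun ω => specNorm (N1 ω) ^ 2 + specNorm ((A1 ω)ᵀ * A1 ω) ^ 2) μ)
    (hENpos : (matExp μ N1).PosDef)
    (K₁ K₂ : Matrix (Fin n) (Fin n) ℝ) (hK₁ : K₁.PosSemidef) (hK₂ : K₂.PosSemidef)
    (hsol₁ : K₁ = piMap (matExp μ (fun ω => N1 ω + (A1 ω)ᵀ * K₁ * A1 ω)))
    (hsol₂ : K₂ = piMap (matExp μ (fun ω => N1 ω + (A1 ω)ᵀ * K₂ * A1 ω))) :
    (K₂ - K₁).PosSemidef := by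
  classical
  -- integrable dominating function
  set g : Ω → ℝ := fun ω => (1 + (specNorm (N1 ω) ^ 2 + specNorm ((A1 ω)ᵀ * A1 ω) ^ 2)) / 2
    with hgdef
  have hg : Integrable g μ := ((integrable_const (1:ℝ)).add hmom).div_const 2
  have hgN : ∀ ω, ‖N1 ω‖ ≤ g ω := by
    intro ω
    have h1 : specNorm (N1 ω) = ‖N1 ω‖ := rfl
    have h2 : (0:ℝ) ≤ specNorm ((A1 ω)ᵀ * A1 ω) ^ 2 := sq_nonneg _
    rw [hgdef]
    simp only [h1]
    nlinarith [sq_nonneg (‖N1 ω‖ - 1)]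
  have hgA : ∀ ω, ‖(A1 ω)ᵀ * A1 ω‖ ≤ g ω := by
    intro ω
    have h1 : specNorm ((A1 ω)ᵀ * A1 ω) = ‖(A1 ω)ᵀ * A1 ω‖ := rfl
    have h2 : (0:ℝ) ≤ specNorm (N1 ω) ^ 2 := sq_nonneg _
    rw [hgdef]
    simp only [h1]
    nlinarith [sq_nonneg (‖(A1 ω)ᵀ * A1 ω‖ - 1)]
  have hg0 : ∀ ω, 0 ≤ g ω := fun ω => le_trans (norm_nonneg _) (hgN ω)
  -- integrability of entries
  have hIntN : ∀ i j, Integrable (fun ω => N1 ω i j) μ := by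
    intro i j
    refine hg.mono' ((measurable_entry hmeasN i j).aestronglyMeasurable) ?_
    refine Filter.Eventually.of_forall fun ω => ?_
    rw [Real.norm_eq_abs]
    exact (entry_abs_le_norm _ i j).trans (hgN ω)
  have hmeasAXA : ∀ X : Matrix (Fin n) (Fin n) ℝ,
      Measurable fun ω => (A1 ω)ᵀ * X * A1 ω := fun X =>
    ((hmeasA.matrix_transpose.matrix_mul measurable_const).matrix_mul hmeasA)
  have hIntX : ∀ (X : Matrix (Fin n) (Fin n) ℝ) i j,
      Integrable (fun ω => ((A1 ω)ᵀ * X * A1 ω) i j) μ := by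
    intro X i j
    refine ((hg.const_mul ‖X‖).mono'
      ((measurable_entry (hmeasAXA X) i j).aestronglyMeasurable) ?_)
    refine Filter.Eventually.of_forall fun ω => ?_
    rw [Real.norm_eq_abs]
    calc |((A1 ω)ᵀ * X * A1 ω) i j| ≤ ‖(A1 ω)ᵀ * X * A1 ω‖ := entry_abs_le_norm _ i j
      _ ≤ ‖X‖ * ‖(A1 ω)ᵀ * A1 ω‖ := norm_AXA_le _ _
      _ ≤ ‖X‖ * g ω := mul_le_mul_of_nonneg_left (hgA ω) (norm_nonneg _)
  -- pointwise facts
  have hptpsd : ∀ (X : Matrix (Fin n) (Fin n) ℝ), X.PosSemidef →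
      ∀ ω, ((A1 ω)ᵀ * X * A1 ω).PosSemidef := by
    intro X hX ω
    have := hX.conjTranspose_mul_mul_same (A1 ω)
    rwa [real_conjTranspose] at this
  -- decomposition of P K
  have hPdecomp : ∀ K : Matrix (Fin n) (Fin n) ℝ,
      matExp μ (fun ω => N1 ω + (A1 ω)ᵀ * K * A1 ω)
        = matExp μ N1 + matExp μ (fun ω => (A1 ω)ᵀ * K * A1 ω) :=
    fun K => matExp_add hIntN (hIntX K)
  have hPposdef : ∀ K : Matrix (Fin n) (Fin n) ℝ, K.PosSemidef →
      (matExp μ (fun ω => N1 ω + (A1 ω)ᵀ * K * A1 ω)).PosDef := by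
    intro K hK
    rw [hPdecomp K]
    exact hENpos.add_posSemidef (matExp_posSemidef (hptpsd K hK) (hIntX K))
  set P₂ := matExp μ (fun ω => N1 ω + (A1 ω)ᵀ * K₂ * A1 ω) with hP₂
  set Γ := gammaMap P₂ with hΓ
  set E := fromRows (1 : Matrix (Fin n) (Fin n) ℝ) Γ with hEdef
  set C := Eᵀ * matExp μ N1 * E with hCdef
  set T : Matrix (Fin n) (Fin n) ℝ → Matrix (Fin n) (Fin n) ℝ :=
    fun X => Eᵀ * matExp μ (fun ω => (A1 ω)ᵀ * X * A1 ω) * E with hTdef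
  -- key equation : Eᵀ * (P K) * E = C + T K
  have hkey : ∀ K : Matrix (Fin n) (Fin n) ℝ,
      Eᵀ * matExp μ (fun ω => N1 ω + (A1 ω)ᵀ * K * A1 ω) * E = C + T K := by
    intro K
    rw [hPdecomp K, Matrix.mul_add, Matrix.add_mul]
  -- operator properties
  have hT_sub : ∀ X Y, T (X - Y) = T X - T Y := by
    intro X Y
    have hpt : (fun ω => (A1 ω)ᵀ * (X - Y) * A1 ω)
        = fun ω => ((A1 ω)ᵀ * X * A1 ω) - ((A1 ω)ᵀ * Y * A1 ω) := by
      funext ω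
      rw [Matrix.mul_sub, Matrix.sub_mul]
    rw [hTdef]
    simp only [hpt]
    rw [matExp_sub (hIntX X) (hIntX Y), Matrix.mul_sub, Matrix.sub_mul]
  have hT_add : ∀ X Y, T (X + Y) = T X + T Y := by
    intro X Y
    have hpt : (fun ω => (A1 ω)ᵀ * (X + Y) * A1 ω)
        = fun ω => ((A1 ω)ᵀ * X * A1 ω) + ((A1 ω)ᵀ * Y * A1 ω) := by
      funext ω
      rw [Matrix.mul_add, Matrix.add_mul]
    rw [hTdef]
    simp only [hpt]
    rw [matExp_add (hIntX X) (hIntX Y), Matrix.mul_add, Matrix.add_mul]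
  have hT_smul : ∀ (r : ℝ) X, T (r • X) = r • T X := by
    intro r X
    have hpt : (fun ω => (A1 ω)ᵀ * (r • X) * A1 ω)
        = fun ω => r • ((A1 ω)ᵀ * X * A1 ω) := by
      funext ω
      rw [Matrix.mul_smul, Matrix.smul_mul]
    rw [hTdef]
    simp only [hpt]
    rw [matExp_smul, Matrix.mul_smul, Matrix.smul_mul]
  have hT_psd : ∀ X, X.PosSemidef → (T X).PosSemidef := by
    intro X hX
    have h := (matExp_posSemidef (hptpsd X hX) (hIntX X)).conjTranspose_mul_mul_same E
    rwa [real_conjTranspose] at h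
  -- iterate versions
  have hiter_add : ∀ (t : ℕ) X Y, T^[t] (X + Y) = T^[t] X + T^[t] Y := by
    intro t
    induction t with
    | zero => intro X Y; simp
    | succ t ih =>
      intro X Y
      rw [Function.iterate_succ_apply', Function.iterate_succ_apply',
        Function.iterate_succ_apply', ih, hT_add]
  have hiter_smul : ∀ (t : ℕ) (r : ℝ) X, T^[t] (r • X) = r • T^[t] X := by
    intro t
    induction t with
    | zero => intro r X; simp
    | succ t ih =>
      intro r X
      rw [Function.iterate_succ_apply', Function.iterate_succ_apply', ih, hT_smul]
  have hiter_psd : ∀ (t : ℕ) X, X.PosSemidef → (T^[t] X).PosSemidef := by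
    intro t
    induction t with
    | zero => intro X hX; simpa using hX
    | succ t ih =>
      intro X hX
      rw [Function.iterate_succ_apply']
      exact hT_psd _ (ih X hX)
  -- hermitian and posdef facts for P K
  have hPherm : ∀ K : Matrix (Fin n) (Fin n) ℝ, K.PosSemidef →
      (matExp μ (fun ω => N1 ω + (A1 ω)ᵀ * K * A1 ω)).IsHermitian :=
    fun K hK => (hPposdef K hK).isHermitian
  -- the two fixed-point relations
  have heq₂ : K₂ = C + T K₂ := by
    calc K₂ = piMap P₂ := hsol₂
      _ = Eᵀ * P₂ * E := (piMap_eq_gamma (hPherm K₂ hK₂) (toBlocks22_posDef (hPposdef K₂ hK₂))).symm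
      _ = C + T K₂ := hkey K₂
  have hineq₁ : (C + T K₁ - K₁).PosSemidef := by
    have h := piMap_loewner (hPherm K₁ hK₁) (toBlocks22_posDef (hPposdef K₁ hK₁)) Γ
    rwa [hkey K₁, ← hsol₁] at h
  -- the difference
  set D := K₂ - K₁ with hDdef
  have hDherm : D.IsHermitian := hK₂.isHermitian.sub hK₁.isHermitian
  have hDstep : (D - T D).PosSemidef := by
    have h : D - T D = C + T K₁ - K₁ := by
      rw [hDdef, hT_sub]
      nth_rewrite 1 [heq₂]
      abel
    rw [h]
    exact hineq₁
  have hDiter : ∀ t : ℕ, (D - T^[t] D).PosSemidef := by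
    intro t
    induction t with
    | zero => simpa using Matrix.PosSemidef.zero
    | succ t ih =>
      have h2 : (T (D - T^[t] D)).PosSemidef := hT_psd _ ih
      rw [hT_sub] at h2
      have h3 := hDstep.add h2
      rw [Function.iterate_succ_apply']
      have : D - T D + (T D - T (T^[t] D)) = D - T (T^[t] D) := by abel
      rwa [this] at h3
  -- expansion of K₂
  have hCiter : ∀ t : ℕ, K₂ = (∑ s ∈ Finset.range t, T^[s] C) + T^[t] K₂ := by
    intro t
    induction t with
    | zero => simp
    | succ t ih =>
      have h1 : T^[t] K₂ = T^[t] C + T^[t+1] K₂ := by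
        nth_rewrite 1 [heq₂]
        rw [hiter_add, Function.iterate_succ_apply]
      rw [Finset.sum_range_succ, add_assoc, ← h1]
      exact ih
  -- C is positive definite
  have hCpos : C.PosDef := posDef_conj_fromRows hENpos Γ
  obtain ⟨r, hr0, hrC1, hrC2⟩ := exists_psd_bound hCpos hDherm
  -- final quadratic form argument
  rw [posSemidef_iff_quad]
  refine ⟨hDherm, fun x => ?_⟩
  set a : ℕ → ℝ := fun t => quad x (T^[t] C) with hadef
  have ha0 : ∀ t, 0 ≤ a t := fun t =>
    quad_nonneg_of_posSemidef (hiter_psd t C hCpos.posSemidef) x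
  have hsumle : ∀ t, ∑ s ∈ Finset.range t, a s ≤ quad x K₂ := by
    intro t
    have h := hCiter t
    have h2 : quad x K₂ = (∑ s ∈ Finset.range t, a s) + quad x (T^[t] K₂) := by
      rw [hadef]
      nth_rewrite 1 [h]
      rw [quad_add, quad_sum]
    have h3 : 0 ≤ quad x (T^[t] K₂) := quad_nonneg_of_posSemidef (hiter_psd t K₂ hK₂) x
    linarith
  have hsummable : Summable a := by
    refine summable_of_sum_range_le ha0 hsumle
  have hlim : Tendsto (fun t => -(r * a t)) atTop (nhds 0) := by
    have := hsummable.tendsto_atTop_zero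
    have h2 : Tendsto (fun t => r * a t) atTop (nhds (r * 0)) := this.const_mul r
    rw [mul_zero] at h2
    simpa using h2.neg
  refine le_of_tendsto hlim (Filter.Eventually.of_forall fun t => ?_)
  -- -(r * a t) ≤ quad x D
  have h1 : quad x (T^[t] D) ≤ quad x D := by
    have := quad_nonneg_of_posSemidef (hDiter t) x
    rw [quad_sub] at this
    linarith
  have h2 : -(r * a t) ≤ quad x (T^[t] D) := by
    have hpsd : (T^[t] (r • C + D)).PosSemidef := hiter_psd t _ hrC2
    have := quad_nonneg_of_posSemidef hpsd x
    rw [hiter_add, hiter_smul, quad_add, quad_smul] at this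
    rw [hadef]
    linarith
  linarith

end Half

end AuxARE

/-- The algebraic Riccati equation has at most one psd solution. -/
theorem ARE_unique
    {n m : ℕ} {Ω : Type*} [MeasurableSpace Ω]
    (μpr : Measure Ω) [IsProbabilityMeasure μpr]
    (A : ℕ → Ω → Matrix (Fin n) (Fin n ⊕ Fin m) ℝ)
    (N : ℕ → Ω → Matrix (Fin n ⊕ Fin m) (Fin n ⊕ Fin m) ℝ)
    (hmeas : ∀ t : ℕ, Measurable fun ω => (A (t + 1) ω, N (t + 1) ω))
    (hindep : ProbabilityTheory.iIndepFun
      (fun (t : ℕ) (ω : Ω) => (A (t + 1) ω, N (t + 1) ω)) μpr)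
    (hident : ∀ t : ℕ, ProbabilityTheory.IdentDistrib
      (fun ω => (A (t + 1) ω, N (t + 1) ω)) (fun ω => (A 1 ω, N 1 ω)) μpr μpr)
    (hNpsd : ∀ (t : ℕ) (ω : Ω), (N (t + 1) ω).PosSemidef)
    (hmom : Integrable
      (fun ω => specNorm (N 1 ω) ^ 2 + specNorm ((A 1 ω)ᵀ * A 1 ω) ^ 2) μpr)
    (hENpos : (matExp μpr (N 1)).PosDef)
    (K₁ K₂ : Matrix (Fin n) (Fin n) ℝ) (hK₁ : K₁.PosSemidef) (hK₂ : K₂.PosSemidef)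
    (hsol₁ : K₁ = piMap (matExp μpr (fun ω => N 1 ω + (A 1 ω)ᵀ * K₁ * A 1 ω)))
    (hsol₂ : K₂ = piMap (matExp μpr (fun ω => N 1 ω + (A 1 ω)ᵀ * K₂ * A 1 ω))) :
    K₁ = K₂ := by
  have hA : Measurable (A 1) := measurable_fst.comp (hmeas 0)
  have hN : Measurable (N 1) := measurable_snd.comp (hmeas 0)
  have h12 := ARE_loewnerLE μpr (A 1) (N 1) hA hN hmom hENpos K₁ K₂ hK₁ hK₂ hsol₁ hsol₂
  have h21 := ARE_loewnerLE μpr (A 1) (N 1) hA hN hmom hENpos K₂ K₁ hK₂ hK₁ hsol₂ hsol₁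
  have h0 : K₂ - K₁ = 0 := posSemidef_antisymm h12 (by rwa [neg_sub])
  have := sub_eq_zero.mp h0
  exact this.symm

end
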